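/- The matrix Ξ(z) with entries built from modified Bessel functions, Ξ_{11}(z) = sqrt(2/π)·π I_{-ν}(2√z), Ξ_{12}(z) = -sqrt(2/π)·K_{-ν}(2√z), Ξ_{21}(z) = sqrt(2/π)·π √z I_{1-ν}(2√z), Ξ_{22}(z) = sqrt(2/π)·√z K_{1-ν}(2√z), satisfies the linear ODE Ξ'(z) = A(z) Ξ(z) with A(z) = [[-ν/(2z), 1/z],[1, ν/(2z)]], for z in the cut plane with principal square root. -/

import Mathlib

open Complex Matrix Filter

/-- Modified Bessel function of the first kind `I_α(x) = Σ_{k≥0} (x/2)^{2k+α}/(k! Γ(k+α+1))`. -/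
noncomputable def besselI (α x : ℂ) : ℂ :=
  ∑' k : ℕ, (x / 2) ^ (2 * k) * (x / 2) ^ α / ((k.factorial : ℂ) * Complex.Gamma ((k : ℂ) + α + 1))

/-- Modified Bessel function of the second kind `K_α(x) = (π/(2 sin πα))(I_{-α}(x) - I_α(x))`. -/
noncomputable def besselK (α x : ℂ) : ℂ :=
  (Real.pi : ℂ) / (2 * Complex.sin ((Real.pi : ℂ) * α)) * (besselI (-α) x - besselI α x)

/-- The matrix `Ξ(z)` built from modified Bessel functions (principal square root `√z`). -/
noncomputable def XiMat (ν z : ℂ) : Matrix (Fin 2) (Fin 2) ℂ :=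
  ((2 / (Real.pi : ℂ)) ^ ((1 : ℂ) / 2)) •
    !![(Real.pi : ℂ) * besselI (-ν) (2 * z ^ ((1 : ℂ) / 2)),
        -besselK (-ν) (2 * z ^ ((1 : ℂ) / 2));
      (Real.pi : ℂ) * z ^ ((1 : ℂ) / 2) * besselI (1 - ν) (2 * z ^ ((1 : ℂ) / 2)),
        z ^ ((1 : ℂ) / 2) * besselK (1 - ν) (2 * z ^ ((1 : ℂ) / 2))]

/-- The coefficient matrix `A(z) = [[-ν/(2z), 1/z], [1, ν/(2z)]]` of the bare ODE. -/
noncomputable def bareA (ν z : ℂ) : Matrix (Fin 2) (Fin 2) ℂ :=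
  !![-ν / (2 * z), 1 / z; 1, ν / (2 * z)]

noncomputable def Sc (α : ℂ) (k : ℕ) : ℂ :=
  ((k.factorial : ℂ) * Complex.Gamma ((k : ℂ) + α + 1))⁻¹

noncomputable def Sf (α z : ℂ) : ℂ := ∑' k : ℕ, z ^ k * Sc α k

lemma norm_Sc (α : ℂ) (k : ℕ) :
    ‖Sc α k‖ = ((k.factorial : ℝ) * ‖Complex.Gamma ((k : ℂ) + α + 1)‖)⁻¹ := by
  rw [Sc, norm_inv, norm_mul, Complex.norm_natCast]

lemma Sc_succ (α : ℂ) (k : ℕ) : ((k : ℂ) + 1) * Sc α (k + 1) = Sc (α + 1) k := by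
  have h1 : ((k + 1 : ℕ) : ℂ) + α + 1 = (k : ℂ) + (α + 1) + 1 := by push_cast; ring
  rw [Sc, Sc, h1, Nat.factorial_succ]
  push_cast
  rw [mul_assoc, mul_inv, mul_inv]
  rw [← mul_assoc, mul_inv_cancel₀ (Nat.cast_add_one_ne_zero k), one_mul, ← mul_inv]

lemma Sc_step (α : ℂ) (k : ℕ) : (α + (k : ℂ)) * Sc α k = Sc (α - 1) k := by
  have h1 : (k : ℂ) + (α - 1) + 1 = (k : ℂ) + α := by ring
  by_cases h : (k : ℂ) + α = 0
  · have hα : α + (k : ℂ) = 0 := by linear_combination h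
    rw [Sc, Sc, h1, h, Complex.Gamma_zero, mul_zero, _root_.inv_zero, hα, zero_mul]
  · have h2 : (k : ℂ) + α + 1 = ((k : ℂ) + α) + 1 := by ring
    rw [Sc, Sc, h1, h2, Complex.Gamma_add_one _ h]
    rw [show (k.factorial : ℂ) * (((k:ℂ)+α) * Complex.Gamma ((k:ℂ)+α))
        = ((k:ℂ)+α) * ((k.factorial : ℂ) * Complex.Gamma ((k:ℂ)+α)) by ring]
    rw [mul_inv, ← mul_assoc, show α + (k:ℂ) = (k:ℂ) + α by ring,
      mul_inv_cancel₀ h, one_mul]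

lemma Sc_ratio (α : ℂ) (M : ℝ) :
    ∀ᶠ k : ℕ in atTop, ((k : ℝ) + 2) * M * ‖Sc α (k + 1)‖ ≤ (1 / 2) * ‖Sc α k‖ := by
  obtain ⟨N, hN⟩ : ∃ N : ℕ, (N : ℝ) ≥ |α.re| + 4 * |M| + 4 := exists_nat_ge _
  filter_upwards [eventually_ge_atTop N] with k hk
  have hk' : (N : ℝ) ≤ (k : ℝ) := by exact_mod_cast hk
  have hre : (1 : ℝ) ≤ ((k : ℂ) + α + 1).re := by
    simp only [Complex.add_re, Complex.natCast_re, Complex.one_re]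
    have := abs_le.mp (le_refl |α.re|) |>.1
    nlinarith [abs_nonneg α.re, abs_nonneg M, neg_abs_le α.re]
  set s : ℂ := (k : ℂ) + α + 1 with hs
  have hsne : s ≠ 0 := fun h => by simp [h] at hre; linarith
  have hΓne : Complex.Gamma s ≠ 0 := by
    apply Complex.Gamma_ne_zero
    intro m hm
    have : s.re = -(m : ℝ) := by rw [hm]; simp
    have : (0:ℝ) ≤ (m:ℝ) := by positivity
    linarith [hre, this]
  have harg : ((k + 1 : ℕ) : ℂ) + α + 1 = s + 1 := by rw [hs]; push_cast; ring
  have hΓsucc : Complex.Gamma (((k+1:ℕ) : ℂ) + α + 1) = s * Complex.Gamma s := by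
    rw [harg, Complex.Gamma_add_one _ hsne]
  have hnorm1 : ‖Sc α (k+1)‖ = (((k+1).factorial : ℝ) * (‖s‖ * ‖Complex.Gamma s‖))⁻¹ := by
    rw [norm_Sc, hΓsucc, norm_mul]
  have hns : (1:ℝ) ≤ ‖s‖ := hre.trans (Complex.re_le_norm s)
  have hfac : ((k+1).factorial : ℝ) = ((k:ℝ)+1) * (k.factorial : ℝ) := by
    rw [Nat.factorial_succ]; push_cast; ring
  rw [hnorm1, norm_Sc, hfac]
  have hΓpos : 0 < ‖Complex.Gamma s‖ := norm_pos_iff.mpr hΓne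
  have hfpos : 0 < (k.factorial : ℝ) := by positivity
  have hspos : 0 < ‖s‖ := by linarith
  have hres : (4*|M| + 5 : ℝ) ≤ ‖s‖ := by
    refine le_trans ?_ (Complex.re_le_norm s)
    simp only [hs, Complex.add_re, Complex.natCast_re, Complex.one_re]
    nlinarith [neg_abs_le α.re]
  have key : 2*(((k:ℝ)+2)*M) ≤ ((k:ℝ)+1)*‖s‖ := by
    nlinarith [abs_nonneg M, le_abs_self M, Nat.cast_nonneg (α := ℝ) k]
  rw [← div_eq_mul_inv, ← div_eq_mul_inv, div_le_div_iff₀ (by positivity) (by positivity)]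
  nlinarith [mul_le_mul_of_nonneg_right key
    (by positivity : (0:ℝ) ≤ (k.factorial : ℝ) * ‖Complex.Gamma s‖),
    hΓpos, hfpos, hspos]

lemma summable_S (α z : ℂ) : Summable (fun k : ℕ => z ^ k * Sc α k) := by
  apply summable_of_ratio_norm_eventually_le (r := 1/2) (by norm_num)
  filter_upwards [Sc_ratio α (max ‖z‖ 1)] with k hk
  rw [norm_mul, norm_mul, norm_pow, norm_pow]
  have h1 : ‖z‖ ^ (k+1) * ‖Sc α (k+1)‖ ≤ ((k:ℝ)+2) * max ‖z‖ 1 * ‖Sc α (k+1)‖ * ‖z‖^k := by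
    rw [pow_succ]
    have hz1 : ‖z‖ ≤ ((k:ℝ)+2) * max ‖z‖ 1 := by
      nlinarith [le_max_left ‖z‖ 1, le_max_right ‖z‖ 1, norm_nonneg z,
        Nat.cast_nonneg (α := ℝ) k, pow_nonneg (norm_nonneg z) k]
    nlinarith [mul_le_mul_of_nonneg_right hz1
      (mul_nonneg (pow_nonneg (norm_nonneg z) k) (norm_nonneg (Sc α (k+1))))]
  calc ‖z‖ ^ (k+1) * ‖Sc α (k+1)‖ ≤ ((k:ℝ)+2) * max ‖z‖ 1 * ‖Sc α (k+1)‖ * ‖z‖^k := h1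
    _ ≤ (1/2 * ‖Sc α k‖) * ‖z‖^k := by
        apply mul_le_mul_of_nonneg_right hk (pow_nonneg (norm_nonneg z) k)
    _ = 1/2 * (‖z‖^k * ‖Sc α k‖) := by ring

lemma summable_kS (α z : ℂ) : Summable (fun k : ℕ => (k : ℂ) * (z ^ k * Sc α k)) := by
  apply summable_of_ratio_norm_eventually_le (r := 1/2) (by norm_num)
  filter_upwards [Sc_ratio α (max ‖z‖ 1), eventually_ge_atTop 1] with k hk hk1
  rw [norm_mul, norm_mul, norm_mul, norm_mul, norm_pow, norm_pow,
    Complex.norm_natCast, Complex.norm_natCast]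
  push_cast
  have hk1' : (1:ℝ) ≤ (k:ℝ) := by exact_mod_cast hk1
  have h1 : ((k:ℝ)+1) * (‖z‖ ^ (k+1) * ‖Sc α (k+1)‖)
      ≤ (((k:ℝ)+2) * max ‖z‖ 1 * ‖Sc α (k+1)‖) * ‖z‖^k := by
    rw [pow_succ]
    have hz1 : ((k:ℝ)+1) * ‖z‖ ≤ ((k:ℝ)+2) * max ‖z‖ 1 := by
      nlinarith [le_max_left ‖z‖ 1, le_max_right ‖z‖ 1, norm_nonneg z,
        Nat.cast_nonneg (α := ℝ) k]
    nlinarith [norm_nonneg (Sc α (k+1)), pow_nonneg (norm_nonneg z) k, norm_nonneg z,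
      mul_nonneg (pow_nonneg (norm_nonneg z) k) (norm_nonneg (Sc α (k+1))),
      mul_le_mul_of_nonneg_right hz1
        (mul_nonneg (pow_nonneg (norm_nonneg z) k) (norm_nonneg (Sc α (k+1))))]
  calc ((k:ℝ)+1) * (‖z‖ ^ (k+1) * ‖Sc α (k+1)‖)
      ≤ (((k:ℝ)+2) * max ‖z‖ 1 * ‖Sc α (k+1)‖) * ‖z‖^k := h1
    _ ≤ (1/2 * ‖Sc α k‖) * ‖z‖^k := by
        apply mul_le_mul_of_nonneg_right hk (pow_nonneg (norm_nonneg z) k)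
    _ ≤ 1/2 * ((k:ℝ) * (‖z‖^k * ‖Sc α k‖)) := by
        nlinarith [norm_nonneg (Sc α k), pow_nonneg (norm_nonneg z) k,
          mul_nonneg (pow_nonneg (norm_nonneg z) k) (norm_nonneg (Sc α k))]

lemma tsum_shift_S (α z : ℂ) :
    HasSum (fun k : ℕ => (k : ℂ) * z ^ (k - 1) * Sc α k) (Sf (α + 1) z) := by
  have h : HasSum (fun k : ℕ => z ^ k * Sc (α+1) k) (Sf (α+1) z) :=
    (summable_S (α + 1) z).hasSum
  have h' : HasSum (fun k : ℕ => ((k : ℂ) + 1) * z ^ k * Sc α (k + 1)) (Sf (α+1) z) := by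
    refine h.congr_fun fun k => ?_
    rw [← Sc_succ]; ring
  have h'' : HasSum (fun k : ℕ => (((k+1 : ℕ) : ℂ)) * z ^ ((k+1) - 1) * Sc α (k+1))
      (Sf (α+1) z) := by
    refine h'.congr_fun fun k => ?_
    push_cast
    rfl
  have := (hasSum_nat_add_iff (f := fun k : ℕ => (k : ℂ) * z ^ (k - 1) * Sc α k) 1).mp h''
  simpa using this

lemma hasDerivAt_S (α z : ℂ) : HasDerivAt (fun w => Sf α w) (Sf (α + 1) z) z := by
  set R : ℝ := ‖z‖ + 1 with hR
  have hRpos : (0:ℝ) < R := by rw [hR]; positivity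
  have hR1 : (1:ℝ) ≤ R := by rw [hR]; nlinarith [norm_nonneg z]
  have hu : Summable (fun k : ℕ => ((k:ℝ)+1) * ‖Sc α k‖ * R ^ k) := by
    apply summable_of_ratio_norm_eventually_le (r := 1/2) (by norm_num)
    filter_upwards [Sc_ratio α R] with k hk
    have e1 : (0:ℝ) ≤ ((k:ℝ)+1) * ‖Sc α k‖ * R ^ k :=
      mul_nonneg (mul_nonneg (by positivity) (norm_nonneg _)) (pow_nonneg hRpos.le k)
    have e2 : (0:ℝ) ≤ ((k+1:ℕ):ℝ)*(1:ℝ) := by positivity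
    rw [Real.norm_of_nonneg (mul_nonneg (mul_nonneg (by positivity) (norm_nonneg _))
      (pow_nonneg hRpos.le (k+1))), Real.norm_of_nonneg e1]
    have h1 : (((k+1:ℕ):ℝ)+1) * ‖Sc α (k+1)‖ * R ^ (k+1)
        = (((k:ℝ)+2) * R * ‖Sc α (k+1)‖) * R ^ k := by rw [pow_succ]; push_cast; ring
    rw [h1]
    calc (((k:ℝ)+2) * R * ‖Sc α (k+1)‖) * R ^ k ≤ (1/2 * ‖Sc α k‖) * R ^ k :=
          mul_le_mul_of_nonneg_right hk (pow_nonneg hRpos.le k)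
      _ ≤ 1/2 * (((k:ℝ)+1) * ‖Sc α k‖ * R ^ k) := by
          nlinarith [mul_nonneg (norm_nonneg (Sc α k)) (pow_nonneg hRpos.le k),
            Nat.cast_nonneg (α := ℝ) k]
  have hder := hasDerivAt_tsum_of_isPreconnected hu
    (Metric.isOpen_ball (x := (0:ℂ)) (ε := R)) ((convex_ball (0:ℂ) R).isPreconnected)
    (g := fun (k : ℕ) (w : ℂ) => w ^ k * Sc α k)
    (g' := fun (k : ℕ) (w : ℂ) => (k : ℂ) * w ^ (k-1) * Sc α k)
    (y₀ := 0) (y := z)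
    (fun k y _ => (hasDerivAt_pow k y).mul_const _)
    ?_ (Metric.mem_ball_self hRpos) (summable_S α 0)
    (Metric.mem_ball.mpr (by rw [dist_zero_right, hR]; linarith))
  · have hval : (∑' k : ℕ, (k : ℂ) * z ^ (k-1) * Sc α k) = Sf (α+1) z :=
      (tsum_shift_S α z).tsum_eq
    rw [hval] at hder
    exact hder
  · intro k y hy
    rw [norm_mul, norm_mul, norm_pow, Complex.norm_natCast]
    have hyR : ‖y‖ ≤ R := by
      have := Metric.mem_ball.mp hy
      rw [dist_zero_right] at this
      linarith
    have h2 : ‖y‖ ^ (k-1) ≤ R ^ k :=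
      (pow_le_pow_left₀ (norm_nonneg y) hyR _).trans (pow_le_pow_right₀ hR1 (Nat.sub_le k 1))
    calc (k:ℝ) * ‖y‖^(k-1) * ‖Sc α k‖ ≤ ((k:ℝ)+1) * R^k * ‖Sc α k‖ := by
          apply mul_le_mul_of_nonneg_right _ (norm_nonneg _)
          have h3 : (0:ℝ) ≤ (k:ℝ) := Nat.cast_nonneg k
          nlinarith [pow_nonneg (norm_nonneg y) (k-1), pow_nonneg hRpos.le k]
      _ = ((k:ℝ)+1) * ‖Sc α k‖ * R^k := by ring

lemma gammaId (α z : ℂ) : α * Sf α z + z * Sf (α + 1) z = Sf (α - 1) z := by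
  have h1 : HasSum (fun k : ℕ => α * (z ^ k * Sc α k)) (α * Sf α z) :=
    (summable_S α z).hasSum.mul_left α
  have h2 : HasSum (fun k : ℕ => (k : ℂ) * z ^ (k - 1) * Sc α k) (Sf (α + 1) z) :=
    tsum_shift_S α z
  have h2' : HasSum (fun k : ℕ => z * ((k : ℂ) * z ^ (k - 1) * Sc α k)) (z * Sf (α + 1) z) :=
    h2.mul_left z
  have h2'' : HasSum (fun k : ℕ => (k : ℂ) * (z ^ k * Sc α k)) (z * Sf (α + 1) z) := by
    refine h2'.congr_fun fun k => ?_
    cases k with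
    | zero => simp
    | succ n =>
      have hzz : z * (z ^ (n + 1 - 1)) = z ^ (n+1) := by
        rw [Nat.add_sub_cancel, pow_succ]; ring
      calc ((n+1 : ℕ) : ℂ) * (z ^ (n+1) * Sc α (n+1))
          = ((n+1 : ℕ) : ℂ) * ((z * z ^ (n + 1 - 1)) * Sc α (n+1)) := by rw [hzz]
        _ = z * (((n+1 : ℕ) : ℂ) * z ^ (n + 1 - 1) * Sc α (n+1)) := by ring
  have h3 := h1.add h2''
  have h4 : HasSum (fun k : ℕ => z ^ k * Sc (α - 1) k) (α * Sf α z + z * Sf (α + 1) z) := by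
    refine h3.congr_fun fun k => ?_
    calc z ^ k * Sc (α - 1) k = z ^ k * ((α + (k:ℂ)) * Sc α k) := by rw [Sc_step]
      _ = α * (z ^ k * Sc α k) + (k:ℂ) * (z ^ k * Sc α k) := by ring
  exact h4.tsum_eq.symm

lemma besselI_eq_S (α w : ℂ) (hw : w ≠ 0) :
    besselI α (2 * w ^ ((1:ℂ)/2)) = (w ^ ((1:ℂ)/2)) ^ α * Sf α w := by
  rw [besselI, Sf, ← tsum_mul_left]
  refine tsum_congr fun k => ?_
  have hhalf : (2 : ℂ) * w ^ ((1:ℂ)/2) / 2 = w ^ ((1:ℂ)/2) := by ring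
  rw [hhalf]
  have hsq : (w ^ ((1:ℂ)/2)) ^ (2 * k) = w ^ k := by
    rw [pow_mul]
    congr 1
    rw [sq, ← Complex.cpow_add _ _ hw]
    norm_num
  rw [hsq, Sc, div_eq_mul_inv]
  ring


lemma cpow_half_pow (w : ℂ) (a : ℂ) : (w ^ ((1:ℂ)/2)) ^ a = w ^ (a/2) := by
  have him : (Complex.log w * ((1:ℂ)/2)).im = w.arg / 2 := by
    simp [Complex.mul_im, Complex.log_im, Complex.log_re]
    ring
  rw [← Complex.cpow_mul]
  · congr 1; ring
  · rw [him]; nlinarith [Complex.neg_pi_lt_arg w, Real.pi_pos]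
  · rw [him]; nlinarith [Complex.arg_le_pi w, Real.pi_pos]

lemma cpow_sub_one (z : ℂ) (hz0 : z ≠ 0) (a : ℂ) : z ^ (a - 1) = z ^ a / z := by
  rw [sub_eq_add_neg, Complex.cpow_add _ _ hz0, Complex.cpow_neg_one, div_eq_mul_inv]

lemma hasDerivAt_base (α μ z : ℂ) (hz : z ∈ Complex.slitPlane) :
    HasDerivAt (fun w => w ^ μ * Sf α w)
      (μ * z ^ (μ - 1) * Sf α z + z ^ μ * Sf (α + 1) z) z :=
  ((Complex.hasStrictDerivAt_cpow_const hz).hasDerivAt).mul (hasDerivAt_S α z)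

lemma X00 (ν w : ℂ) (hw : w ∈ Complex.slitPlane) :
    XiMat ν w 0 0 = ((2 / (Real.pi : ℂ)) ^ ((1:ℂ)/2) * (Real.pi : ℂ)) *
      (w ^ ((-ν)/2) * Sf (-ν) w) := by
  have hw0 : w ≠ 0 := Complex.slitPlane_ne_zero hw
  simp only [XiMat, Matrix.smul_apply, Matrix.cons_val', Matrix.cons_val_zero, Matrix.empty_val',
    Matrix.cons_val_fin_one, smul_eq_mul, Matrix.of_apply, Matrix.cons_val_one, Matrix.head_cons,
    Matrix.head_fin_const]
  rw [besselI_eq_S _ _ hw0, cpow_half_pow]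
  ring

lemma X10 (ν w : ℂ) (hw : w ∈ Complex.slitPlane) :
    XiMat ν w 1 0 = ((2 / (Real.pi : ℂ)) ^ ((1:ℂ)/2) * (Real.pi : ℂ)) *
      (w ^ ((2-ν)/2) * Sf (1-ν) w) := by
  have hw0 : w ≠ 0 := Complex.slitPlane_ne_zero hw
  simp only [XiMat, Matrix.smul_apply, Matrix.cons_val', Matrix.cons_val_zero, Matrix.empty_val',
    Matrix.cons_val_fin_one, smul_eq_mul, Matrix.of_apply, Matrix.cons_val_one, Matrix.head_cons,
    Matrix.head_fin_const]
  rw [besselI_eq_S _ _ hw0, cpow_half_pow,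
    show (2-ν)/2 = (1:ℂ)/2 + (1-ν)/2 by ring, Complex.cpow_add _ _ hw0]
  ring

lemma X01 (ν w : ℂ) (hw : w ∈ Complex.slitPlane) :
    XiMat ν w 0 1 = ((2 / (Real.pi : ℂ)) ^ ((1:ℂ)/2) *
        ((Real.pi : ℂ) / (2 * Complex.sin ((Real.pi : ℂ) * (-ν))))) *
      (w ^ ((-ν)/2) * Sf (-ν) w - w ^ (ν/2) * Sf ν w) := by
  have hw0 : w ≠ 0 := Complex.slitPlane_ne_zero hw
  simp only [XiMat, Matrix.smul_apply, Matrix.cons_val', Matrix.cons_val_zero, Matrix.empty_val',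
    Matrix.cons_val_fin_one, smul_eq_mul, Matrix.of_apply, Matrix.cons_val_one, Matrix.head_cons,
    Matrix.head_fin_const]
  rw [besselK, neg_neg, besselI_eq_S _ _ hw0, besselI_eq_S _ _ hw0,
    cpow_half_pow, cpow_half_pow]
  ring

lemma X11 (ν w : ℂ) (hw : w ∈ Complex.slitPlane) :
    XiMat ν w 1 1 = ((2 / (Real.pi : ℂ)) ^ ((1:ℂ)/2) *
        ((Real.pi : ℂ) / (2 * Complex.sin ((Real.pi : ℂ) * (1-ν))))) *
      (w ^ (ν/2) * Sf (ν-1) w - w ^ ((2-ν)/2) * Sf (1-ν) w) := by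
  have hw0 : w ≠ 0 := Complex.slitPlane_ne_zero hw
  simp only [XiMat, Matrix.smul_apply, Matrix.cons_val', Matrix.cons_val_zero, Matrix.empty_val',
    Matrix.cons_val_fin_one, smul_eq_mul, Matrix.of_apply, Matrix.cons_val_one, Matrix.head_cons,
    Matrix.head_fin_const]
  rw [besselK, show -(1-ν) = ν - 1 by ring, besselI_eq_S _ _ hw0, besselI_eq_S _ _ hw0,
    cpow_half_pow, cpow_half_pow,
    show (2-ν)/2 = (1:ℂ)/2 + (1-ν)/2 by ring, Complex.cpow_add _ _ hw0,
    show (ν:ℂ)/2 = (1:ℂ)/2 + (ν-1)/2 by ring, Complex.cpow_add _ _ hw0]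
  ring

lemma kappa_rel (ν : ℂ) :
    (Real.pi : ℂ) / (2 * Complex.sin ((Real.pi : ℂ) * (1-ν)))
      = -((Real.pi : ℂ) / (2 * Complex.sin ((Real.pi : ℂ) * (-ν)))) := by
  rw [show (Real.pi : ℂ) * (1-ν) = (Real.pi : ℂ) - (Real.pi : ℂ)*ν by ring,
    show (Real.pi : ℂ) * (-ν) = -((Real.pi : ℂ)*ν) by ring,
    Complex.sin_pi_sub, Complex.sin_neg, mul_neg, div_neg, neg_neg]

set_option maxHeartbeats 1600000 in
/-- The matrix `Ξ(z)` satisfies the linear ODE `Ξ'(z) = A(z) Ξ(z)` on the cut plane. -/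
theorem XiMat_ODE (ν z : ℂ) (hz : z ∈ Complex.slitPlane) (i j : Fin 2) :
    HasDerivAt (fun w => XiMat ν w i j) ((bareA ν z * XiMat ν z) i j) z := by
  have hz0 : z ≠ 0 := Complex.slitPlane_ne_zero hz
  have hmem : ∀ᶠ w in nhds z, w ∈ Complex.slitPlane :=
    Complex.isOpen_slitPlane.eventually_mem hz
  have hg1 : (1-ν) * Sf (1-ν) z + z * Sf (2-ν) z = Sf (-ν) z := by
    have h := gammaId (1-ν) z
    rw [show (1-ν)+1 = 2-ν by ring, show (1-ν)-1 = -ν by ring] at h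
    exact h
  have hgν : ν * Sf ν z + z * Sf (ν+1) z = Sf (ν-1) z := gammaId ν z
  have e00 : (fun w => XiMat ν w 0 0) =ᶠ[nhds z]
      (fun w => (((2 / (Real.pi : ℂ)) ^ ((1:ℂ)/2)) * (Real.pi : ℂ)) * (w ^ ((-ν)/2) * Sf (-ν) w)) := by
    filter_upwards [hmem] with w hw; exact X00 ν w hw
  have e10 : (fun w => XiMat ν w 1 0) =ᶠ[nhds z]
      (fun w => (((2 / (Real.pi : ℂ)) ^ ((1:ℂ)/2)) * (Real.pi : ℂ)) * (w ^ ((2-ν)/2) * Sf (1-ν) w)) := by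
    filter_upwards [hmem] with w hw; exact X10 ν w hw
  have e01 : (fun w => XiMat ν w 0 1) =ᶠ[nhds z]
      (fun w => (((2 / (Real.pi : ℂ)) ^ ((1:ℂ)/2)) * ((Real.pi : ℂ) / (2 * Complex.sin ((Real.pi : ℂ) * (-ν))))) * (w ^ ((-ν)/2) * Sf (-ν) w - w ^ (ν/2) * Sf ν w)) := by
    filter_upwards [hmem] with w hw; exact X01 ν w hw
  have e11 : (fun w => XiMat ν w 1 1) =ᶠ[nhds z]
      (fun w => (((2 / (Real.pi : ℂ)) ^ ((1:ℂ)/2)) * -((Real.pi : ℂ) / (2 * Complex.sin ((Real.pi : ℂ) * (-ν))))) * (w ^ (ν/2) * Sf (ν-1) w - w ^ ((2-ν)/2) * Sf (1-ν) w)) := by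
    filter_upwards [hmem] with w hw
    rw [X11 ν w hw, kappa_rel ν]
  have d00 : HasDerivAt (fun w => (((2 / (Real.pi : ℂ)) ^ ((1:ℂ)/2)) * (Real.pi : ℂ)) * (w ^ ((-ν)/2) * Sf (-ν) w))
      ((((2 / (Real.pi : ℂ)) ^ ((1:ℂ)/2)) * (Real.pi : ℂ)) *
        ((-ν)/2 * z ^ ((-ν)/2 - 1) * Sf (-ν) z + z ^ ((-ν)/2) * Sf (-ν + 1) z)) z :=
    (hasDerivAt_base (-ν) ((-ν)/2) z hz).const_mul _
  have d10 : HasDerivAt (fun w => (((2 / (Real.pi : ℂ)) ^ ((1:ℂ)/2)) * (Real.pi : ℂ)) * (w ^ ((2-ν)/2) * Sf (1-ν) w))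
      ((((2 / (Real.pi : ℂ)) ^ ((1:ℂ)/2)) * (Real.pi : ℂ)) *
        ((2-ν)/2 * z ^ ((2-ν)/2 - 1) * Sf (1-ν) z + z ^ ((2-ν)/2) * Sf ((1-ν) + 1) z)) z :=
    (hasDerivAt_base (1-ν) ((2-ν)/2) z hz).const_mul _
  have d01 : HasDerivAt
      (fun w => (((2 / (Real.pi : ℂ)) ^ ((1:ℂ)/2)) * ((Real.pi : ℂ) / (2 * Complex.sin ((Real.pi : ℂ) * (-ν))))) * (w ^ ((-ν)/2) * Sf (-ν) w - w ^ (ν/2) * Sf ν w))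
      ((((2 / (Real.pi : ℂ)) ^ ((1:ℂ)/2)) * ((Real.pi : ℂ) / (2 * Complex.sin ((Real.pi : ℂ) * (-ν))))) *
        (((-ν)/2 * z ^ ((-ν)/2 - 1) * Sf (-ν) z + z ^ ((-ν)/2) * Sf (-ν + 1) z)
          - (ν/2 * z ^ (ν/2 - 1) * Sf ν z + z ^ (ν/2) * Sf (ν + 1) z))) z :=
    ((hasDerivAt_base (-ν) ((-ν)/2) z hz).sub (hasDerivAt_base ν (ν/2) z hz)).const_mul _
  have d11 : HasDerivAt
      (fun w => (((2 / (Real.pi : ℂ)) ^ ((1:ℂ)/2)) * -((Real.pi : ℂ) / (2 * Complex.sin ((Real.pi : ℂ) * (-ν))))) * (w ^ (ν/2) * Sf (ν-1) w - w ^ ((2-ν)/2) * Sf (1-ν) w))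
      ((((2 / (Real.pi : ℂ)) ^ ((1:ℂ)/2)) * -((Real.pi : ℂ) / (2 * Complex.sin ((Real.pi : ℂ) * (-ν))))) *
        ((ν/2 * z ^ (ν/2 - 1) * Sf (ν-1) z + z ^ (ν/2) * Sf ((ν-1) + 1) z)
          - ((2-ν)/2 * z ^ ((2-ν)/2 - 1) * Sf (1-ν) z + z ^ ((2-ν)/2) * Sf ((1-ν) + 1) z))) z :=
    ((hasDerivAt_base (ν-1) (ν/2) z hz).sub (hasDerivAt_base (1-ν) ((2-ν)/2) z hz)).const_mul _
  fin_cases i <;> fin_cases j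
  · -- (0,0)
    have hval : (bareA ν z * XiMat ν z) 0 0
        = (((2 / (Real.pi : ℂ)) ^ ((1:ℂ)/2)) * (Real.pi : ℂ)) *
          ((-ν)/2 * z ^ ((-ν)/2 - 1) * Sf (-ν) z + z ^ ((-ν)/2) * Sf (-ν + 1) z) := by
      rw [Matrix.mul_apply, Fin.sum_univ_two, X00 ν z hz, X10 ν z hz]
      simp only [bareA, Matrix.cons_val', Matrix.cons_val_zero, Matrix.empty_val',
        Matrix.cons_val_fin_one, Matrix.of_apply, Matrix.cons_val_one, Matrix.head_cons,
        Matrix.head_fin_const]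
      rw [cpow_sub_one z hz0, show (2-ν)/2 = (-ν)/2 + 1 by ring, Complex.cpow_add _ _ hz0,
        Complex.cpow_one, show -ν + 1 = 1-ν by ring]
      field_simp [hz0]
      try ring
    show HasDerivAt (fun w => XiMat ν w 0 0) ((bareA ν z * XiMat ν z) 0 0) z
    rw [hval]
    exact d00.congr_of_eventuallyEq e00
  · -- (0,1)
    have hval : (bareA ν z * XiMat ν z) 0 1
        = (((2 / (Real.pi : ℂ)) ^ ((1:ℂ)/2)) * ((Real.pi : ℂ) / (2 * Complex.sin ((Real.pi : ℂ) * (-ν))))) *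
          (((-ν)/2 * z ^ ((-ν)/2 - 1) * Sf (-ν) z + z ^ ((-ν)/2) * Sf (-ν + 1) z)
            - (ν/2 * z ^ (ν/2 - 1) * Sf ν z + z ^ (ν/2) * Sf (ν + 1) z)) := by
      rw [Matrix.mul_apply, Fin.sum_univ_two, X01 ν z hz, X11 ν z hz, kappa_rel ν]
      simp only [bareA, Matrix.cons_val', Matrix.cons_val_zero, Matrix.empty_val',
        Matrix.cons_val_fin_one, Matrix.of_apply, Matrix.cons_val_one, Matrix.head_cons,
        Matrix.head_fin_const]
      rw [← hgν, cpow_sub_one z hz0, cpow_sub_one z hz0,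
        show (2-ν)/2 = (-ν)/2 + 1 by ring, Complex.cpow_add _ _ hz0,
        Complex.cpow_one, show -ν + 1 = 1-ν by ring]
      generalize (Real.pi : ℂ) / (2 * Complex.sin ((Real.pi : ℂ) * (-ν))) = W
      field_simp [hz0]
      try ring
    show HasDerivAt (fun w => XiMat ν w 0 1) ((bareA ν z * XiMat ν z) 0 1) z
    rw [hval]
    exact d01.congr_of_eventuallyEq e01
  · -- (1,0)
    have hval : (bareA ν z * XiMat ν z) 1 0
        = (((2 / (Real.pi : ℂ)) ^ ((1:ℂ)/2)) * (Real.pi : ℂ)) *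
          ((2-ν)/2 * z ^ ((2-ν)/2 - 1) * Sf (1-ν) z + z ^ ((2-ν)/2) * Sf ((1-ν) + 1) z) := by
      rw [Matrix.mul_apply, Fin.sum_univ_two, X00 ν z hz, X10 ν z hz]
      simp only [bareA, Matrix.cons_val', Matrix.cons_val_zero, Matrix.empty_val',
        Matrix.cons_val_fin_one, Matrix.of_apply, Matrix.cons_val_one, Matrix.head_cons,
        Matrix.head_fin_const]
      rw [show (1-ν) + 1 = 2-ν by ring, ← hg1, cpow_sub_one z hz0,
        show (2-ν)/2 = (-ν)/2 + 1 by ring, Complex.cpow_add _ _ hz0, Complex.cpow_one]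
      field_simp [hz0]
      try ring
    show HasDerivAt (fun w => XiMat ν w 1 0) ((bareA ν z * XiMat ν z) 1 0) z
    rw [hval]
    exact d10.congr_of_eventuallyEq e10
  · -- (1,1)
    have hval : (bareA ν z * XiMat ν z) 1 1
        = (((2 / (Real.pi : ℂ)) ^ ((1:ℂ)/2)) * -((Real.pi : ℂ) / (2 * Complex.sin ((Real.pi : ℂ) * (-ν))))) *
          ((ν/2 * z ^ (ν/2 - 1) * Sf (ν-1) z + z ^ (ν/2) * Sf ((ν-1) + 1) z)
            - ((2-ν)/2 * z ^ ((2-ν)/2 - 1) * Sf (1-ν) z + z ^ ((2-ν)/2) * Sf ((1-ν) + 1) z)) := by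
      rw [Matrix.mul_apply, Fin.sum_univ_two, X01 ν z hz, X11 ν z hz, kappa_rel ν]
      simp only [bareA, Matrix.cons_val', Matrix.cons_val_zero, Matrix.empty_val',
        Matrix.cons_val_fin_one, Matrix.of_apply, Matrix.cons_val_one, Matrix.head_cons,
        Matrix.head_fin_const]
      rw [show (ν-1) + 1 = ν by ring, show (1-ν) + 1 = 2-ν by ring, ← hg1,
        cpow_sub_one z hz0, cpow_sub_one z hz0,
        show (2-ν)/2 = (-ν)/2 + 1 by ring, Complex.cpow_add _ _ hz0, Complex.cpow_one]
      generalize (Real.pi : ℂ) / (2 * Complex.sin ((Real.pi : ℂ) * (-ν))) = W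
      field_simp [hz0]
      try ring
    show HasDerivAt (fun w => XiMat ν w 1 1) ((bareA ν z * XiMat ν z) 1 1) z
    rw [hval]
    exact d11.congr_of_eventuallyEq e11
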